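/- Let R̄ be a commutative ring of characteristic p and S̄ a commutative R̄-algebra with structure morphism ψ. Suppose (s_i)_{i∈I} is a generating family of S̄ as an R̄-module. Then the following are equivalent: (1) the relative Frobenius Frob_{S̄/R̄} : S̄ ⊗_{ψ, Frob_{R̄}} R̄ → S̄ is surjective; (2) for all l ∈ ℕ, the family (s_i^{p^l})_{i∈I} generates S̄ as an R̄-module; (3) the family (s_i^p)_{i∈I} generates S̄ as an R̄-module. -/
import Mathlib



/-- `R` viewed as an `R`-module through the Frobenius endomorphism `a ↦ aᵖ`. -/
def FrobTwist (p : ℕ) (R : Type*) : Type _ := R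

/-- The identity of `R`, viewed as a map `FrobTwist p R → R`. -/
def FrobTwist.val {p : ℕ} {R : Type*} (x : FrobTwist p R) : R := x

instance (p : ℕ) (R : Type*) [CommRing R] : AddCommGroup (FrobTwist p R) :=
  inferInstanceAs (AddCommGroup R)

noncomputable instance (p : ℕ) [Fact p.Prime] (R : Type*) [CommRing R] [CharP R p] :
    Module R (FrobTwist p R) :=
  Module.compHom (R := R) R (frobenius R p)

/-- The relative Frobenius `S ⊗_{ψ, Frob_R} R → S`, `s ⊗ r ↦ s^p * ψ(r)`, as an additive
map on the tensor product of `S` (with its usual `R`-module structure) and `R` (with the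
Frobenius-twisted `R`-module structure). -/
noncomputable def relativeFrobenius (p : ℕ) [Fact p.Prime] (R S : Type*) [CommRing R]
    [CommRing S] [Algebra R S] [CharP R p] [CharP S p] :
    TensorProduct R S (FrobTwist p R) →+ S :=
  TensorProduct.liftAddHom
    (AddMonoidHom.mk'
      (fun s => AddMonoidHom.mk' (fun r : FrobTwist p R => s ^ p * algebraMap R S r.val)
        (fun r r' => by
          show s ^ p * algebraMap R S (r.val + r'.val) = _
          rw [map_add, mul_add]))
      (fun s t => by
        ext r
        show (s + t) ^ p * algebraMap R S r.val =
          s ^ p * algebraMap R S r.val + t ^ p * algebraMap R S r.val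
        haveI : ExpChar S p := ExpChar.prime Fact.out
        rw [add_pow_char, add_mul]))
    (fun a s r => by
      show (a • s) ^ p * algebraMap R S r.val =
        s ^ p * algebraMap R S (frobenius R p a * r.val)
      rw [Algebra.smul_def, mul_pow, ← map_pow, map_mul, frobenius_def]
      ring)

lemma pow_mem_span_pow (p : ℕ) [Fact p.Prime] {R S : Type*} [CommRing R] [CommRing S]
    [Algebra R S] [CharP S p] {I : Type*} (t : I → S)
    (hgen : Submodule.span R (Set.range t) = ⊤) (x : S) :
    x ^ p ∈ Submodule.span R (Set.range fun i => t i ^ p) := by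
  haveI : ExpChar S p := ExpChar.prime Fact.out
  have hx : x ∈ Submodule.span R (Set.range t) := hgen ▸ Submodule.mem_top
  induction hx using Submodule.span_induction with
  | mem y hy => obtain ⟨i, rfl⟩ := hy; exact Submodule.subset_span ⟨i, rfl⟩
  | zero => rw [zero_pow (Fact.out : p.Prime).ne_zero]; exact Submodule.zero_mem _
  | add a b _ _ ha hb => rw [add_pow_char]; exact add_mem ha hb
  | smul r a _ ha => rw [smul_pow]; exact Submodule.smul_mem _ _ ha

lemma span_pow_step (p : ℕ) [Fact p.Prime] {R S : Type*} [CommRing R] [CommRing S]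
    [Algebra R S] [CharP S p] {I : Type*} (s t : I → S)
    (ht : Submodule.span R (Set.range t) = ⊤)
    (hs : Submodule.span R (Set.range fun i => s i ^ p) = ⊤) :
    Submodule.span R (Set.range fun i => t i ^ p) = ⊤ := by
  rw [eq_top_iff, ← hs]
  apply Submodule.span_le.mpr
  rintro _ ⟨i, rfl⟩
  exact pow_mem_span_pow p t ht (s i)

/-- for a commutative algebra `S` over a commutative ring `R` of
characteristic `p`, generated as an `R`-module by a family `s`, the following are
equivalent: (1) the relative Frobenius `S ⊗_{ψ, Frob_R} R → S` is surjective;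
(2) for all `l`, the family of `p^l`-th powers of the `s i` generates `S` as an
`R`-module; (3) the family of `p`-th powers of the `s i` generates `S` as an
`R`-module. -/
theorem characterise_relatively_semiperfect (p : ℕ) [Fact p.Prime] (R S : Type*)
    [CommRing R] [CommRing S] [Algebra R S] [CharP R p] [CharP S p]
    {I : Type*} (s : I → S) (hgen : Submodule.span R (Set.range s) = ⊤) :
    List.TFAE
      [Function.Surjective (relativeFrobenius p R S),
       ∀ l : ℕ, Submodule.span R (Set.range fun i => s i ^ p ^ l) = ⊤,
       Submodule.span R (Set.range fun i => s i ^ p) = ⊤] := by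
  tfae_have 1 → 3 := by
    intro h
    rw [eq_top_iff]
    rintro y -
    obtain ⟨z, rfl⟩ := h y
    induction z using TensorProduct.induction_on with
    | zero => rw [map_zero]; exact Submodule.zero_mem _
    | tmul a r =>
      have : relativeFrobenius p R S (a ⊗ₜ r) = a ^ p * algebraMap R S r.val := rfl
      rw [this, mul_comm, ← Algebra.smul_def]
      exact Submodule.smul_mem _ _ (pow_mem_span_pow p s hgen a)
    | add x y hx hy => rw [map_add]; exact add_mem hx hy
  tfae_have 3 → 1 := by
    intro h y
    have hy : y ∈ Submodule.span R (Set.range fun i => s i ^ p) := h ▸ Submodule.mem_top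
    rw [Finsupp.mem_span_range_iff_exists_finsupp] at hy
    obtain ⟨c, hc⟩ := hy
    refine ⟨c.sum fun i a => (s i) ⊗ₜ[R] (a : FrobTwist p R), ?_⟩
    rw [map_finsuppSum, ← hc]
    refine Finsupp.sum_congr fun i _ => ?_
    show s i ^ p * algebraMap R S (c i) = c i • s i ^ p
    rw [mul_comm, Algebra.smul_def]
  tfae_have 3 → 2 := by
    intro h l
    induction l with
    | zero => simpa using hgen
    | succ l ih =>
      have := span_pow_step p s (fun i => s i ^ p ^ l) ih h
      simpa [← pow_mul, ← pow_succ] using this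
  tfae_have 2 → 3 := by
    intro h
    simpa using h 1
  tfae_finish
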